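/- Let i ∈ {1,…,n} with ker(π_{i}) ∩ L = {0}, and S ⊆ L^{i}. Then S is an ω̄^i-Gröbner basis of L^{i} if and only if π_{i}⁻¹(S) is a generating set of L. -/

import Mathlib

open scoped Classical

noncomputable section

variable {ι : Type*} [Fintype ι]

/-- `x ∈ ℕ^n`, i.e. all coordinates nonnegative. -/
def Nonneg (x : ι → ℤ) : Prop := ∀ i, 0 ≤ x i

/-- componentwise positive part `u⁺`. -/
def vposPart (x : ι → ℤ) : ι → ℤ := fun i => max (x i) 0

/-- componentwise negative part `u⁻`. -/
def vnegPart (x : ι → ℤ) : ι → ℤ := fun i => max (-x i) 0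

/-- support of a vector. -/
def suppV (x : ι → ℤ) : Set ι := {i | x i ≠ 0}

/-- membership in the fiber `F_{L,b} = {x ∈ ℕ^n : x ≡ b (mod L)}`. -/
def inFiber (L : AddSubgroup (ι → ℤ)) (b x : ι → ℤ) : Prop :=
  Nonneg x ∧ x - b ∈ L

/-- adjacency in the fiber graph: `x` and `y` differ by an element of `±S`. -/
def adjS (S : Set (ι → ℤ)) (x y : ι → ℤ) : Prop := x - y ∈ S ∨ y - x ∈ S

/-- `p 0, p 1, …, p k` is a path in the fiber graph `G(F_{L,b}, S)`. -/
def IsPathIn (L : AddSubgroup (ι → ℤ)) (S : Set (ι → ℤ)) (b : ι → ℤ)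
    (k : ℕ) (p : ℕ → ι → ℤ) : Prop :=
  (∀ i ≤ k, inFiber L b (p i)) ∧ ∀ i < k, adjS S (p i) (p (i+1))

/-- `x` and `y` are connected in the fiber graph `G(F_{L,b}, S)`. -/
def ConnIn (L : AddSubgroup (ι → ℤ)) (S : Set (ι → ℤ)) (b x y : ι → ℤ) : Prop :=
  ∃ k p, IsPathIn L S b k p ∧ p 0 = x ∧ p k = y

/-- `S` is a generating set of the lattice `L`: all fiber graphs are connected. -/
def IsGenSet (L : AddSubgroup (ι → ℤ)) (S : Set (ι → ℤ)) : Prop :=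
  ∀ b x y, inFiber L b x → inFiber L b y → ConnIn L S b x y

/-- `succ` (written `≻`) is a term ordering for `L`: an additive total
well-ordering on every fiber. -/
structure IsTermOrder (L : AddSubgroup (ι → ℤ))
    (succ : (ι → ℤ) → (ι → ℤ) → Prop) : Prop where
  trans : ∀ {x y z}, succ x y → succ y z → succ x z
  irrefl : ∀ x, ¬ succ x x
  total : ∀ b x y, inFiber L b x → inFiber L b y → x ≠ y → succ x y ∨ succ y x
  additive : ∀ x y γ, Nonneg γ → succ x y → succ (x + γ) (y + γ)
  wf : ∀ b, WellFounded (fun x y : ι → ℤ => inFiber L b x ∧ inFiber L b y ∧ succ y x)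

/-- `L_≻ = {u ∈ L : u⁺ ≻ u⁻}`. -/
def Lpos (L : AddSubgroup (ι → ℤ)) (succ : (ι → ℤ) → (ι → ℤ) → Prop) :
    Set (ι → ℤ) :=
  {u | u ∈ L ∧ succ (vposPart u) (vnegPart u)}

/-- `m` is the `≻`-minimal element of the fiber `F_{L,b}`. -/
def IsMinimalFiber (L : AddSubgroup (ι → ℤ)) (b : ι → ℤ)
    (succ : (ι → ℤ) → (ι → ℤ) → Prop) (m : ι → ℤ) : Prop :=
  inFiber L b m ∧ ∀ y, inFiber L b y → y ≠ m → succ y m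

/-- `G` is a `≻`-Gröbner basis of `L`: from every `x ∈ ℕ^n` there is a
`≻`-decreasing path in `G(F_{L,x},G)` to the `≻`-minimal element of `F_{L,x}`. -/
def IsGroebner (L : AddSubgroup (ι → ℤ)) (succ : (ι → ℤ) → (ι → ℤ) → Prop)
    (G : Set (ι → ℤ)) : Prop :=
  ∀ x, Nonneg x → ∃ m, IsMinimalFiber L x succ m ∧
    ∃ k p, IsPathIn L G x k p ∧ p 0 = x ∧ p k = m ∧ ∀ i < k, succ (p i) (p (i+1))

/-- there is a `≻`-reduction path from `x` to `y` in `G(F_{L,b},G)`: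
no intermediate node is `≻` than both endpoints. -/
def IsRedPath (L : AddSubgroup (ι → ℤ)) (G : Set (ι → ℤ)) (b : ι → ℤ)
    (succ : (ι → ℤ) → (ι → ℤ) → Prop) (x y : ι → ℤ) : Prop :=
  ∃ k p, IsPathIn L G b k p ∧ p 0 = x ∧ p k = y ∧
    ∀ i, 0 < i → i < k → ¬ (succ (p i) x ∧ succ (p i) y)

/-- `(x,z,y)` is a `≻`-critical path in `G(F_{L,b},G)`. -/
def IsCriticalIn (L : AddSubgroup (ι → ℤ)) (G : Set (ι → ℤ)) (b : ι → ℤ)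
    (succ : (ι → ℤ) → (ι → ℤ) → Prop) (x z y : ι → ℤ) : Prop :=
  inFiber L b x ∧ inFiber L b z ∧ inFiber L b y ∧
  adjS G x z ∧ adjS G z y ∧ succ z x ∧ succ z y

/-- `z^(u,v) := max{u⁺, v⁺}` componentwise. -/
def zOf (u v : ι → ℤ) : ι → ℤ := fun i => max (vposPart u i) (vposPart v i)

/-- `x^(u,v) := z^(u,v) − u`. -/
def xOf (u v : ι → ℤ) : ι → ℤ := zOf u v - u

/-- `y^(u,v) := z^(u,v) − v`. -/
def yOf (u v : ι → ℤ) : ι → ℤ := zOf u v - v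

/-- `(x,z,y)` is a `≻`-critical path for the pair `(u,v)`. -/
def IsCriticalFor (succ : (ι → ℤ) → (ι → ℤ) → Prop) (u v x z y : ι → ℤ) : Prop :=
  Nonneg x ∧ Nonneg z ∧ Nonneg y ∧ z - x = u ∧ z - y = v ∧ succ z x ∧ succ z y

/-- rational inner product `φ·x`. -/
def qdot (φ : ι → ℚ) (x : ι → ℤ) : ℚ := ∑ i, φ i * (x i : ℚ)

/-- there is a `φ`-reduction path from `x` to `y` in `G(F_{L,b},G)`. -/
def IsPhiRedPath (L : AddSubgroup (ι → ℤ)) (G : Set (ι → ℤ)) (b : ι → ℤ)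
    (φ : ι → ℚ) (x y : ι → ℤ) : Prop :=
  ∃ k p, IsPathIn L G b k p ∧ p 0 = x ∧ p k = y ∧
    ∀ i, 0 < i → i < k → ¬ (qdot φ x < qdot φ (p i) ∧ qdot φ y < qdot φ (p i))

/-- `G` is a `φ`-Gröbner basis of `L`. -/
def IsPhiGroebner (L : AddSubgroup (ι → ℤ)) (φ : ι → ℚ) (G : Set (ι → ℤ)) : Prop :=
  ∀ b x y, inFiber L b x → inFiber L b y → IsPhiRedPath L G b φ x y

/-- `x ∧_σ y`: componentwise min on `σ`, zero elsewhere. -/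
def meetOn (σ : Set ι) (x y : ι → ℤ) : ι → ℤ :=
  fun i => if i ∈ σ then min (x i) (y i) else 0

/-- `T` is `σ`-saturated on `S`. -/
def IsSaturatedOn (L : AddSubgroup (ι → ℤ)) (σ : Set ι) (S T : Set (ι → ℤ)) : Prop :=
  ∀ b x y, inFiber L b x → inFiber L b y → ConnIn L S b x y →
    ConnIn L T (b - meetOn σ x y) (x - meetOn σ x y) (y - meetOn σ x y)

/-- membership in `F^σ_{L,b}`: nonnegative outside `σ`. -/
def inFiberFree (L : AddSubgroup (ι → ℤ)) (σ : Set ι) (b x : ι → ℤ) : Prop :=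
  (∀ i, i ∉ σ → 0 ≤ x i) ∧ x - b ∈ L

/-- path in the graph `G(F^σ_{L,b}, S)`. -/
def IsPathFree (L : AddSubgroup (ι → ℤ)) (σ : Set ι) (S : Set (ι → ℤ)) (b : ι → ℤ)
    (k : ℕ) (p : ℕ → ι → ℤ) : Prop :=
  (∀ i ≤ k, inFiberFree L σ b (p i)) ∧ ∀ i < k, adjS S (p i) (p (i+1))

/-- connectivity in `G(F^σ_{L,b}, S)`. -/
def ConnFree (L : AddSubgroup (ι → ℤ)) (σ : Set ι) (S : Set (ι → ℤ))
    (b x y : ι → ℤ) : Prop :=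
  ∃ k p, IsPathFree L σ S b k p ∧ p 0 = x ∧ p k = y

/-- `S` is a `σ`-generating set of `L`. -/
def IsGenSetFree (L : AddSubgroup (ι → ℤ)) (σ : Set ι) (S : Set (ι → ℤ)) : Prop :=
  ∀ b x y, inFiberFree L σ b x → inFiberFree L σ b y → ConnFree L σ S b x y

/-- there is a `z`-bounded path from `x` to `y` in `G(F_{L,b},G)`:
all nodes are `≺ z`. -/
def IsBoundedPath (L : AddSubgroup (ι → ℤ)) (G : Set (ι → ℤ)) (b : ι → ℤ)
    (succ : (ι → ℤ) → (ι → ℤ) → Prop) (z x y : ι → ℤ) : Prop :=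
  ∃ k p, IsPathIn L G b k p ∧ p 0 = x ∧ p k = y ∧ ∀ i ≤ k, succ z (p i)

/-- `ē^i = −e^i` as a rational vector. -/
def ebar [DecidableEq ι] (i : ι) : ι → ℚ := fun j => if j = i then -1 else 0

/-- projection deleting the `i`-th coordinate. -/
def projCoord {n : ℕ} (i : Fin (n+1)) : (Fin (n+1) → ℤ) →+ (Fin n → ℤ) where
  toFun x := fun j => x (i.succAbove j)
  map_zero' := rfl
  map_add' _ _ := rfl

/-- projection onto the coordinates outside `σ`. -/
def projSet {n : ℕ} (σ : Finset (Fin n)) :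
    (Fin n → ℤ) →+ ({ i : Fin n // i ∉ σ } → ℤ) where
  toFun x := fun j => x j.1
  map_zero' := rfl
  map_add' _ _ := rfl

end

section AuxStmt13

lemma qdot_sub' {ι : Type*} [Fintype ι] (φ : ι → ℚ) (a b : ι → ℤ) :
    qdot φ (a - b) = qdot φ a - qdot φ b := by
  unfold qdot
  rw [← Finset.sum_sub_distrib]
  refine Finset.sum_congr rfl fun j _ => ?_
  have : (a - b) j = a j - b j := rfl
  rw [this]
  push_cast
  ring

lemma qdot_neg' {ι : Type*} [Fintype ι] (φ : ι → ℚ) (a : ι → ℤ) :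
    qdot (-φ) a = - qdot φ a := by
  unfold qdot
  rw [← Finset.sum_neg_distrib]
  refine Finset.sum_congr rfl fun j _ => ?_
  have : (-φ) j = -(φ j) := rfl
  rw [this]; ring

lemma proj_inj' {n : ℕ} {L : AddSubgroup (Fin (n+1) → ℤ)} {i : Fin (n+1)}
    (hker : ∀ u ∈ L, projCoord i u = 0 → u = 0)
    {u v : Fin (n+1) → ℤ} (hu : u ∈ L) (hv : v ∈ L)
    (h : projCoord i u = projCoord i v) : u = v := by
  have h0 : u - v = 0 := hker _ (sub_mem hu hv) (by rw [map_sub, h, sub_self])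
  exact sub_eq_zero.mp h0

lemma coordQ {n : ℕ} {L : AddSubgroup (Fin (n+1) → ℤ)} {i : Fin (n+1)} {ω : Fin n → ℚ}
    (hω : ∀ u ∈ L, qdot ω (projCoord i u) = (u i : ℚ))
    {b x : Fin (n+1) → ℤ} (h : x - b ∈ L) :
    (x i : ℚ) = ((b i : ℚ) - qdot ω (projCoord i b)) + qdot ω (projCoord i x) := by
  have h1 := hω _ h
  rw [map_sub, qdot_sub'] at h1
  have h2 : ((x - b) i : ℚ) = (x i : ℚ) - (b i : ℚ) := by
    have : (x - b) i = x i - b i := rfl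
    rw [this]; push_cast; ring
  rw [h2] at h1
  linarith

lemma genset_bounded {n : ℕ} {L : AddSubgroup (Fin (n+1) → ℤ)} {G : Set (Fin (n+1) → ℤ)}
    (hGen : IsGenSet L G) (i : Fin (n+1)) {b x y : Fin (n+1) → ℤ}
    (hx : inFiber L b x) (hy : inFiber L b y) :
    ∃ k p, IsPathIn L G b k p ∧ p 0 = x ∧ p k = y ∧
      ∀ j ≤ k, min (x i) (y i) ≤ p j i := by
  classical
  set m := min (x i) (y i) with hm
  have hm0 : 0 ≤ m := le_min (hx.1 i) (hy.1 i)
  set e : Fin (n+1) → ℤ := Pi.single i m with he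
  have hei : e i = m := by rw [he]; exact Pi.single_eq_same (M := fun _ => ℤ) i m
  have hej : ∀ j, j ≠ i → e j = 0 := fun j hj => by rw [he]; exact Pi.single_eq_of_ne (M := fun _ => ℤ) hj m
  have henn : ∀ j, 0 ≤ e j := by
    intro j
    by_cases hji : j = i
    · subst hji; rw [hei]; exact hm0
    · rw [hej j hji]
  have key : ∀ z : Fin (n+1) → ℤ, inFiber L b z → m ≤ z i →
      inFiber L (b - e) (z - e) := by
    intro z hz hzi
    refine ⟨fun j => ?_, ?_⟩
    · by_cases hji : j = i
      · subst hji
        have : (z - e) j = z j - e j := rfl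
        rw [this, hei]
        omega
      · have : (z - e) j = z j - e j := rfl
        rw [this, hej j hji, sub_zero]
        exact hz.1 j
    · have h2 : z - e - (b - e) = z - b := by abel
      rw [h2]; exact hz.2
  obtain ⟨k, q, hq, hq0, hqk⟩ := hGen (b - e) (x - e) (y - e)
    (key x hx (min_le_left _ _)) (key y hy (min_le_right _ _))
  refine ⟨k, fun j => q j + e, ⟨fun j hj => ?_, fun j hj => ?_⟩, ?_, ?_, ?_⟩
  · refine ⟨fun l => ?_, ?_⟩
    · show 0 ≤ (q j + e) l
      have h1 : (q j + e) l = q j l + e l := rfl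
      rw [h1]
      have := (hq.1 j hj).1 l
      have := henn l
      omega
    · show q j + e - b ∈ L
      have h2 : q j + e - b = q j - (b - e) := by abel
      rw [h2]; exact (hq.1 j hj).2
  · have h3 : q j + e - (q (j+1) + e) = q j - q (j+1) := by abel
    have h4 : q (j+1) + e - (q j + e) = q (j+1) - q j := by abel
    rcases hq.2 j hj with h | h
    · left; rwa [h3]
    · right; rwa [h4]
  · show q 0 + e = x
    rw [hq0]; abel
  · show q k + e = y
    rw [hqk]; abel
  · intro j hj
    show m ≤ (q j + e) i
    have h1 : (q j + e) i = q j i + e i := rfl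
    rw [h1, hei]
    have := (hq.1 j hj).1 i
    omega

end AuxStmt13

/-- with `ker(π_i) ∩ L = {0}` and `S ⊆ L^i`, `S` is an
`ω̄^i`-Gröbner basis of `L^i` iff `π_i⁻¹(S)` is a generating set of `L`. -/
theorem stmt13 {n : ℕ} (L : AddSubgroup (Fin (n+1) → ℤ))
    (hL : ∀ u ∈ L, Nonneg u → u = 0) (i : Fin (n+1))
    (hker : ∀ u ∈ L, projCoord i u = 0 → u = 0)
    (ω : Fin n → ℚ) (hω : ∀ u ∈ L, qdot ω (projCoord i u) = (u i : ℚ))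
    (S : Set (Fin n → ℤ)) (hS : ∀ s ∈ S, s ∈ L.map (projCoord i)) :
    IsPhiGroebner (L.map (projCoord i)) (-ω) S ↔
      IsGenSet L {u | u ∈ L ∧ projCoord i u ∈ S} := by
  classical
  constructor
  · -- Gröbner basis ⟹ generating set
    intro hG b x y hx hy
    have hπx : inFiber (L.map (projCoord i)) (projCoord i b) (projCoord i x) :=
      ⟨fun m => hx.1 (i.succAbove m),
       AddSubgroup.mem_map.mpr ⟨x - b, hx.2, by rw [map_sub]⟩⟩
    have hπy : inFiber (L.map (projCoord i)) (projCoord i b) (projCoord i y) :=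
      ⟨fun m => hy.1 (i.succAbove m),
       AddSubgroup.mem_map.mpr ⟨y - b, hy.2, by rw [map_sub]⟩⟩
    obtain ⟨k, p', hpath, h0, hk, hred⟩ := hG (projCoord i b) _ _ hπx hπy
    set q : ℕ → Fin n → ℤ := fun j => p' (min j k) with hqdef
    have hq_eq : ∀ j, j ≤ k → q j = p' j := by
      intro j hj; simp only [hqdef, min_eq_left hj]
    have hqfib : ∀ j, inFiber (L.map (projCoord i)) (projCoord i b) (q j) :=
      fun j => hpath.1 _ (min_le_right j k)
    have hex : ∀ j, ∃ u, u ∈ L ∧ projCoord i u = q j - projCoord i b := by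
      intro j
      obtain ⟨u, hu, hu2⟩ := AddSubgroup.mem_map.mp (hqfib j).2
      exact ⟨u, hu, hu2⟩
    choose U hUL hUπ using hex
    set p : ℕ → Fin (n+1) → ℤ := fun j => b + U j with hpdef
    have hπp : ∀ j, projCoord i (p j) = q j := by
      intro j
      show projCoord i (b + U j) = q j
      rw [map_add, hUπ j]; abel
    have hbound : ∀ j, min (qdot ω (projCoord i x)) (qdot ω (projCoord i y))
        ≤ qdot ω (q j) := by
      intro j
      rcases Nat.eq_zero_or_pos (min j k) with h0' | hpos
      · have : q j = projCoord i x := by rw [hqdef]; simp only; rw [h0', h0]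
        rw [this]; exact min_le_left _ _
      rcases eq_or_lt_of_le (min_le_right j k) with heq | hlt
      · have : q j = projCoord i y := by rw [hqdef]; simp only; rw [heq, hk]
        rw [this]; exact min_le_right _ _
      · have hq' : q j = p' (min j k) := rfl
        rcases not_and_or.mp (hred (min j k) hpos hlt) with h | h
        · have h' := not_lt.mp h
          rw [qdot_neg', qdot_neg'] at h'
          rw [hq']
          exact le_trans (min_le_left _ _) (by linarith)
        · have h' := not_lt.mp h
          rw [qdot_neg', qdot_neg'] at h'
          rw [hq']
          exact le_trans (min_le_right _ _) (by linarith)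
    have hpL : ∀ j, p j - b ∈ L := by
      intro j
      have : p j - b = U j := by show b + U j - b = U j; abel
      rw [this]; exact hUL j
    have hxQ := coordQ hω hx.2
    have hyQ := coordQ hω hy.2
    have hpi : ∀ j, 0 ≤ p j i := by
      intro j
      have hpQ := coordQ hω (hpL j)
      rw [hπp j] at hpQ
      have hQ : (0 : ℚ) ≤ (p j i : ℚ) := by
        rcases min_le_iff.mp (hbound j) with h | h
        · have hx0 : (0 : ℚ) ≤ (x i : ℚ) := by exact_mod_cast hx.1 i
          rw [hpQ]; rw [hxQ] at hx0; linarith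
        · have hy0 : (0 : ℚ) ≤ (y i : ℚ) := by exact_mod_cast hy.1 i
          rw [hpQ]; rw [hyQ] at hy0; linarith
      exact_mod_cast hQ
    have hfibp : ∀ j, inFiber L b (p j) := by
      intro j
      refine ⟨fun l => ?_, hpL j⟩
      by_cases hl : l = i
      · subst hl; exact hpi j
      · obtain ⟨m, hm⟩ := Fin.exists_succAbove_eq (Ne.symm (fun h => hl h.symm))
        have h1 : 0 ≤ projCoord i (p j) m := by rw [hπp j]; exact (hqfib j).1 m
        rw [← hm]; exact h1
    refine ⟨k, p, ⟨fun j _ => hfibp j, fun j hj => ?_⟩, ?_, ?_⟩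
    · have hd1 : p j - p (j+1) = U j - U (j+1) := by
        show b + U j - (b + U (j+1)) = _; abel
      have hd2 : p (j+1) - p j = U (j+1) - U j := by
        show b + U (j+1) - (b + U j) = _; abel
      rcases hpath.2 j hj with h | h
      · left
        refine ⟨by rw [hd1]; exact sub_mem (hUL j) (hUL (j+1)), ?_⟩
        rw [map_sub, hπp j, hπp (j+1), hq_eq j (le_of_lt hj), hq_eq (j+1) hj]
        exact h
      · right
        refine ⟨by rw [hd2]; exact sub_mem (hUL (j+1)) (hUL j), ?_⟩
        rw [map_sub, hπp j, hπp (j+1), hq_eq j (le_of_lt hj), hq_eq (j+1) hj]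
        exact h
    · have hU0 : U 0 = x - b := by
        refine proj_inj' hker (hUL 0) hx.2 ?_
        rw [hUπ 0, hq_eq 0 (Nat.zero_le k), h0, map_sub]
      show b + U 0 = x
      rw [hU0]; abel
    · have hUk : U k = y - b := by
        refine proj_inj' hker (hUL k) hy.2 ?_
        rw [hUπ k, hq_eq k le_rfl, hk, map_sub]
      show b + U k = y
      rw [hUk]; abel
  · -- generating set ⟹ Gröbner basis
    intro hGen b' x' y' hx' hy'
    obtain ⟨ux, huxL, huxπ⟩ := AddSubgroup.mem_map.mp hx'.2
    obtain ⟨uy, huyL, huyπ⟩ := AddSubgroup.mem_map.mp hy'.2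
    set M : ℤ := max 0 (max (-(ux i)) (-(uy i))) with hM
    set b : Fin (n+1) → ℤ := Fin.insertNth (α := fun _ => ℤ) i M b' with hb
    have hπb : projCoord i b = b' := by
      funext j
      show b (i.succAbove j) = b' j
      rw [hb]; simp
    have hbi : b i = M := by rw [hb]; simp
    have hπx : projCoord i (b + ux) = x' := by
      rw [map_add, hπb, huxπ]; abel
    have hπy : projCoord i (b + uy) = y' := by
      rw [map_add, hπb, huyπ]; abel
    have hxF : inFiber L b (b + ux) := by
      refine ⟨fun l => ?_, by simpa using huxL⟩
      by_cases hl : l = i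
      · subst hl
        have : (b + ux) l = b l + ux l := rfl
        rw [this, hbi, hM]
        omega
      · obtain ⟨m, hm⟩ := Fin.exists_succAbove_eq (Ne.symm (fun h => hl h.symm))
        have h1 : 0 ≤ projCoord i (b + ux) m := by rw [hπx]; exact hx'.1 m
        rw [← hm]; exact h1
    have hyF : inFiber L b (b + uy) := by
      refine ⟨fun l => ?_, by simpa using huyL⟩
      by_cases hl : l = i
      · subst hl
        have : (b + uy) l = b l + uy l := rfl
        rw [this, hbi, hM]
        omega
      · obtain ⟨m, hm⟩ := Fin.exists_succAbove_eq (Ne.symm (fun h => hl h.symm))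
        have h1 : 0 ≤ projCoord i (b + uy) m := by rw [hπy]; exact hy'.1 m
        rw [← hm]; exact h1
    obtain ⟨k, p, hpath, h0, hk, hbd⟩ := genset_bounded hGen i hxF hyF
    refine ⟨k, fun j => projCoord i (p j), ⟨fun j hj => ?_, fun j hj => ?_⟩,
      (by show projCoord i (p 0) = x'; rw [h0, hπx]), (by show projCoord i (p k) = y'; rw [hk, hπy]), ?_⟩
    · refine ⟨fun m => (hpath.1 j hj).1 (i.succAbove m), ?_⟩
      exact AddSubgroup.mem_map.mpr ⟨p j - b, (hpath.1 j hj).2, by rw [map_sub, hπb]⟩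
    · rcases hpath.2 j hj with h | h
      · left
        have h2 := h.2
        rw [map_sub] at h2
        exact h2
      · right
        have h2 := h.2
        rw [map_sub] at h2
        exact h2
    · intro j hj0 hjk hcon
      obtain ⟨hA, hB⟩ := hcon
      rw [qdot_neg', qdot_neg'] at hA hB
      have hpjL : p j - b ∈ L := (hpath.1 j (le_of_lt hjk)).2
      have h1 := coordQ hω hpjL
      have h2 := coordQ hω (show b + ux - b ∈ L by simpa using huxL)
      have h3 := coordQ hω (show b + uy - b ∈ L by simpa using huyL)
      rw [hπx] at h2
      rw [hπy] at h3
      have hb1 : (p j i : ℚ) < ((b + ux) i : ℚ) := by rw [h1, h2]; linarith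
      have hb2 : (p j i : ℚ) < ((b + uy) i : ℚ) := by rw [h1, h3]; linarith
      have hmin := hbd j (le_of_lt hjk)
      have hminQ : ((min ((b + ux) i) ((b + uy) i) : ℤ) : ℚ) ≤ (p j i : ℚ) := by
        exact_mod_cast hmin
      push_cast at hminQ
      have := lt_min hb1 hb2
      simp only [min_def] at hminQ this
      split_ifs at hminQ this <;> linarith
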